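/- A retract of a well-filtered T0 space is well-filtered; that is, if X is well-filtered and there are continuous maps f : X → Y and g : Y → X with f ∘ g = id_Y (Y a T0 space), then Y is well-filtered. -/

import Mathlib

open Set

universe u

variable {α : Type u}

/-- The specialization order used in the paper: `x ≤ y` iff `x ∈ closure {y}`. -/
def specLE [TopologicalSpace α] (x y : α) : Prop := x ∈ closure ({y} : Set α)

/-- `↑x = {y | x ≤ y}` in the specialization order. -/
def upOf [TopologicalSpace α] (x : α) : Set α := {y | specLE x y}

/-- `↑F = {y | ∃ a ∈ F, a ≤ y}` in the specialization order. -/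
def upSetOf [TopologicalSpace α] (F : Set α) : Set α := {y | ∃ a ∈ F, specLE a y}

/-- `↓B = {x | ∃ b ∈ B, x ≤ b}` in the specialization order. -/
def downOf [TopologicalSpace α] (B : Set α) : Set α := {x | ∃ b ∈ B, specLE x b}

/-- A set directed with respect to the specialization order: nonempty, and any two
elements have an upper bound in it. -/
def SDirected [TopologicalSpace α] (D : Set α) : Prop :=
  D.Nonempty ∧ ∀ a ∈ D, ∀ b ∈ D, ∃ c ∈ D, specLE a c ∧ specLE b c

/-- `s` is a supremum (least upper bound) of `D` in the specialization order. -/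
def SIsSup [TopologicalSpace α] (D : Set α) (s : α) : Prop :=
  (∀ d ∈ D, specLE d s) ∧ ∀ t : α, (∀ d ∈ D, specLE d t) → specLE s t

/-- Upper set (= saturated set) in the specialization order. -/
def SUpper [TopologicalSpace α] (A : Set α) : Prop :=
  ∀ ⦃x y : α⦄, x ∈ A → specLE x y → y ∈ A

/-- Scott open set with respect to the specialization order. -/
def SScottOpen [TopologicalSpace α] (U : Set α) : Prop :=
  SUpper U ∧ ∀ D : Set α, SDirected D → ∀ s : α, SIsSup D s → s ∈ U → (D ∩ U).Nonempty

/-- A d-space: a dcpo under the specialization order, all open sets Scott open. -/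
def IsDSpace (α : Type u) [TopologicalSpace α] : Prop :=
  (∀ D : Set α, SDirected D → ∃ s : α, SIsSup D s) ∧
    ∀ U : Set α, IsOpen U → SScottOpen U

/-- Member of `K(X)`: nonempty, compact and saturated. -/
def IsKSet [TopologicalSpace α] (K : Set α) : Prop :=
  K.Nonempty ∧ IsCompact K ∧ SUpper K

/-- A filtered family of sets: nonempty, and any two members contain a common member. -/
def FilteredFam (𝒦 : Set (Set α)) : Prop :=
  𝒦.Nonempty ∧ ∀ K1 ∈ 𝒦, ∀ K2 ∈ 𝒦, ∃ K3 ∈ 𝒦, K3 ⊆ K1 ∩ K2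

/-- Well-filtered space: for every filtered family of nonempty compact saturated sets whose
intersection is contained in an open `U`, some member is contained in `U`. -/
def IsWellFiltered (α : Type u) [TopologicalSpace α] : Prop :=
  ∀ 𝒦 : Set (Set α), (∀ K ∈ 𝒦, IsKSet K) → FilteredFam 𝒦 →
    ∀ U : Set α, IsOpen U → ⋂₀ 𝒦 ⊆ U → ∃ K ∈ 𝒦, K ⊆ U

/-- Rudin set: a nonempty set `A` such that for some filtered family `𝒦 ⊆ K(X)`,
`closure A` is a minimal closed set meeting every member of `𝒦`. -/
def IsRudin [TopologicalSpace α] (A : Set α) : Prop :=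
  A.Nonempty ∧ ∃ 𝒦 : Set (Set α), (∀ K ∈ 𝒦, IsKSet K) ∧ FilteredFam 𝒦 ∧
    (∀ K ∈ 𝒦, (closure A ∩ K).Nonempty) ∧
    ∀ B : Set α, IsClosed B → B ⊆ closure A → (∀ K ∈ 𝒦, (B ∩ K).Nonempty) → B = closure A

/-- Well-filtered determined set: every continuous map into a well-filtered T0 space sends it
to a set whose closure is the closure of a unique point. -/
def IsWFD [TopologicalSpace α] (A : Set α) : Prop :=
  ∀ (Y : Type u) [TopologicalSpace Y] [T0Space Y], IsWellFiltered Y →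
    ∀ f : α → Y, Continuous f → ∃! y : Y, closure (f '' A) = closure ({y} : Set Y)

/-- Irreducible set. -/
def IsIrred [TopologicalSpace α] (A : Set α) : Prop :=
  A.Nonempty ∧ ∀ F1 F2 : Set α, IsClosed F1 → IsClosed F2 → A ⊆ F1 ∪ F2 → A ⊆ F1 ∨ A ⊆ F2

/-- Sober space: every irreducible closed set is the closure of a unique point. -/
def IsSober (α : Type u) [TopologicalSpace α] : Prop :=
  ∀ A : Set α, IsClosed A → IsIrred A → ∃! x : α, A = closure ({x} : Set α)

/-- `A` has a maximal element with respect to the specialization order. -/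
def HasMaxElem [TopologicalSpace α] (A : Set α) : Prop :=
  ∃ m ∈ A, ∀ a ∈ A, specLE m a → a = m

/-- Strong d-space. -/
def IsStrongDSpace (α : Type u) [TopologicalSpace α] : Prop :=
  ∀ D : Set α, SDirected D → ∀ x : α, ∀ U : Set α, IsOpen U →
    (⋂ d ∈ D, upOf d) ∩ upOf x ⊆ U → ∃ d ∈ D, upOf d ∩ upOf x ⊆ U

lemma specLE_refl [TopologicalSpace α] (x : α) : specLE x x := subset_closure rfl

lemma specLE_trans [TopologicalSpace α] {x y z : α} (h1 : specLE x y) (h2 : specLE y z) :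
    specLE x z := by
  have : closure ({y} : Set α) ⊆ closure ({z} : Set α) :=
    closure_minimal (singleton_subset_iff.2 h2) isClosed_closure
  exact this h1

lemma open_upper [TopologicalSpace α] {U : Set α} (hU : IsOpen U) : SUpper U := by
  intro x y hx hxy
  by_contra hy
  have : closure ({y} : Set α) ⊆ Uᶜ :=
    closure_minimal (singleton_subset_iff.2 hy) hU.isClosed_compl
  exact this hxy hx

lemma specLE_map {β : Type u} [TopologicalSpace α] [TopologicalSpace β]
    {f : α → β} (hf : Continuous f) {x y : α} (h : specLE x y) : specLE (f x) (f y) := by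
  have := image_closure_subset_closure_image (s := ({y} : Set α)) hf
  have h2 : f x ∈ closure (f '' {y}) := this ⟨x, h, rfl⟩
  simpa [image_singleton, specLE] using h2

lemma subset_upSetOf [TopologicalSpace α] (S : Set α) : S ⊆ upSetOf S :=
  fun a ha => ⟨a, ha, specLE_refl a⟩

lemma upSetOf_subset_open [TopologicalSpace α] {S U : Set α} (hU : IsOpen U) (h : S ⊆ U) :
    upSetOf S ⊆ U := by
  rintro y ⟨a, ha, hay⟩
  exact open_upper hU (h ha) hay

lemma isCompact_upSetOf [TopologicalSpace α] {S : Set α} (hS : IsCompact S) :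
    IsCompact (upSetOf S) := by
  refine isCompact_of_finite_subcover ?_
  intro ι V hV hcov
  obtain ⟨t, ht⟩ := hS.elim_finite_subcover V hV ((subset_upSetOf S).trans hcov)
  exact ⟨t, upSetOf_subset_open (isOpen_iUnion fun i => isOpen_iUnion fun _ => hV i) ht⟩

lemma upper_upSetOf [TopologicalSpace α] (S : Set α) : SUpper (upSetOf S) := by
  rintro x y ⟨a, ha, hax⟩ hxy
  exact ⟨a, ha, specLE_trans hax hxy⟩

/-- a retract of a well-filtered T0 space is well-filtered. -/
theorem stmt_11 {α : Type u} {β : Type u} [TopologicalSpace α] [T0Space α]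
    [TopologicalSpace β] [T0Space β] (hα : IsWellFiltered α)
    (f : α → β) (g : β → α) (hf : Continuous f) (hg : Continuous g)
    (hfg : f ∘ g = id) : IsWellFiltered β := by
  intro 𝒦 hK hfil U hU hsub
  set 𝒦' : Set (Set α) := (fun K => upSetOf (g '' K)) '' 𝒦 with h𝒦'
  have hK' : ∀ K ∈ 𝒦', IsKSet K := by
    rintro _ ⟨K, hKmem, rfl⟩
    obtain ⟨hne, hcomp, -⟩ := hK K hKmem
    exact ⟨(hne.image g).mono (subset_upSetOf _),
      isCompact_upSetOf (hcomp.image hg), upper_upSetOf _⟩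
  have hfil' : FilteredFam 𝒦' := by
    obtain ⟨⟨K0, hK0⟩, hdir⟩ := hfil
    refine ⟨⟨_, ⟨K0, hK0, rfl⟩⟩, ?_⟩
    rintro _ ⟨K1, hK1, rfl⟩ _ ⟨K2, hK2, rfl⟩
    obtain ⟨K3, hK3, hsub3⟩ := hdir K1 hK1 K2 hK2
    refine ⟨_, ⟨K3, hK3, rfl⟩, ?_⟩
    rintro y ⟨a, ⟨b, hb, rfl⟩, hay⟩
    exact ⟨⟨g b, ⟨b, (hsub3 hb).1, rfl⟩, hay⟩, ⟨g b, ⟨b, (hsub3 hb).2, rfl⟩, hay⟩⟩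
  have hinter : ⋂₀ 𝒦' ⊆ f ⁻¹' U := by
    intro x hx
    refine hsub ?_
    intro K hKmem
    have hxK : x ∈ upSetOf (g '' K) := hx _ ⟨K, hKmem, rfl⟩
    obtain ⟨_, ⟨b, hb, rfl⟩, hle⟩ := hxK
    have : specLE (f (g b)) (f x) := specLE_map hf hle
    rw [show f (g b) = b from congrFun hfg b] at this
    exact (hK K hKmem).2.2 hb this
  obtain ⟨_, ⟨K, hKmem, rfl⟩, hKsub⟩ := hα 𝒦' hK' hfil' (f ⁻¹' U) (hU.preimage hf) hinter
  refine ⟨K, hKmem, fun b hb => ?_⟩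
  have : f (g b) ∈ U := hKsub (subset_upSetOf _ ⟨b, hb, rfl⟩)
  rwa [show f (g b) = b from congrFun hfg b] at this
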